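/- Let (Ω, F, P) be a probability space with a filtration F₀ ⊆ F₁ ⊆ ... ⊆ F_K, and let 0 = τ₀ ≤ τ₁ ≤ ... ≤ τ_K be random variables such that τ_n is F_n-measurable for each n. Suppose there is γ ∈ (0, 1] with E[ e^{−(τ_{n+1} − τ_n)} | F_n ] ≤ γ almost surely for every 0 ≤ n < K. Then for every T ≥ 0, P[ τ_K ≤ T ] ≤ e^T γ^K. -/

import Mathlib

open MeasureTheory

/-- Iterated exponential-moment bound for stopping-time increments: if
`0 = τ₀ ≤ τ₁ ≤ ... ≤ τ_K` is adapted to a filtration `F₀ ⊆ ... ⊆ F_K` and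
`E[e^{-(τ_{n+1} - τ_n)} | F_n] ≤ γ` a.s. for every `n < K`, then
`P[τ_K ≤ T] ≤ e^T γ^K`. -/
theorem exponential_tail_of_increments {Ω : Type*} [m0 : MeasurableSpace Ω]
    (μ : Measure Ω) [IsProbabilityMeasure μ]
    (K : ℕ) (F : ℕ → MeasurableSpace Ω)
    (hFle : ∀ n, F n ≤ m0) (hFmono : Monotone F)
    (τ : ℕ → Ω → ℝ)
    (hτ0 : ∀ ω, τ 0 ω = 0)
    (hτmono : ∀ n < K, ∀ ω, τ n ω ≤ τ (n + 1) ω)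
    (hτmeas : ∀ n ≤ K, Measurable[F n] (τ n))
    (γ : ℝ) (hγ0 : 0 < γ) (hγ1 : γ ≤ 1)
    (hexp : ∀ n < K, ∀ᵐ ω ∂μ,
      (μ[fun ω' => Real.exp (-(τ (n + 1) ω' - τ n ω')) | F n]) ω ≤ γ)
    (T : ℝ) (hT : 0 ≤ T) :
    (μ {ω | τ K ω ≤ T}).toReal ≤ Real.exp T * γ ^ K := by
  -- nonnegativity of τ n for n ≤ K
  have hτnn : ∀ n, n ≤ K → ∀ ω, 0 ≤ τ n ω := by
    intro n
    induction n with
    | zero => intro _ ω; simp [hτ0]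
    | succ m ih =>
      intro hn ω
      exact le_trans (ih (le_trans (Nat.le_succ m) hn) ω)
        (hτmono m (Nat.lt_of_succ_le hn) ω)
  set g : ℕ → Ω → ℝ := fun n ω => Real.exp (-(τ n ω)) with hg
  have hgmeas : ∀ n, n ≤ K → Measurable (g n) := fun n hn =>
    Real.measurable_exp.comp (((hτmeas n hn).mono (hFle n) le_rfl).neg)
  have hgbd : ∀ n, n ≤ K → ∀ ω, ‖g n ω‖ ≤ 1 := by
    intro n hn ω
    rw [Real.norm_eq_abs, abs_of_pos (Real.exp_pos _)]
    exact Real.exp_le_one_iff.mpr (neg_nonpos.mpr (hτnn n hn ω))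
  have hgint : ∀ n, n ≤ K → Integrable (g n) μ := by
    intro n hn
    exact (integrable_const (1:ℝ)).mono' (hgmeas n hn).aestronglyMeasurable
      (Filter.Eventually.of_forall (hgbd n hn))
  -- one-step estimate
  have step : ∀ n, n < K → ∫ ω, g (n+1) ω ∂μ ≤ γ * ∫ ω, g n ω ∂μ := by
    intro n hn
    have hn1 : n + 1 ≤ K := hn
    have hnK : n ≤ K := le_of_lt hn
    set d : Ω → ℝ := fun ω => Real.exp (-(τ (n+1) ω - τ n ω)) with hd
    have hdmeas : Measurable d :=
      Real.measurable_exp.comp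
        ((((hτmeas (n+1) hn1).mono (hFle (n+1)) le_rfl).sub
          ((hτmeas n hnK).mono (hFle n) le_rfl)).neg)
    have hdbd : ∀ ω, ‖d ω‖ ≤ 1 := by
      intro ω
      rw [Real.norm_eq_abs, abs_of_pos (Real.exp_pos _)]
      exact Real.exp_le_one_iff.mpr (neg_nonpos.mpr (sub_nonneg.mpr (hτmono n hn ω)))
    have hdint : Integrable d μ :=
      (integrable_const (1:ℝ)).mono' hdmeas.aestronglyMeasurable
        (Filter.Eventually.of_forall hdbd)
    have hfactor : g (n+1) = g n * d := by
      funext ω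
      simp only [hg, hd, Pi.mul_apply, ← Real.exp_add]
      ring_nf
    have hsm : StronglyMeasurable[F n] (g n) :=
      (Real.measurable_exp.comp (hτmeas n hnK).neg).stronglyMeasurable
    have hpull : μ[g (n+1) | F n] =ᵐ[μ] g n * μ[d | F n] := by
      rw [hfactor]
      exact condExp_mul_of_stronglyMeasurable_left hsm (hfactor ▸ hgint (n+1) hn1) hdint
    have h1 : ∫ ω, g (n+1) ω ∂μ = ∫ ω, (μ[g (n+1) | F n]) ω ∂μ :=
      (integral_condExp (hFle n)).symm
    have h2 : ∫ ω, (μ[g (n+1) | F n]) ω ∂μ = ∫ ω, g n ω * (μ[d | F n]) ω ∂μ :=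
      integral_congr_ae hpull
    have hcint : Integrable (fun ω => g n ω * (μ[d | F n]) ω) μ := by
      have := (integrable_condExp (m := F n) (f := d) (μ := μ)).bdd_mul
        (hgmeas n hnK).aestronglyMeasurable (Filter.Eventually.of_forall (hgbd n hnK))
      exact this
    have h3 : ∫ ω, g n ω * (μ[d | F n]) ω ∂μ ≤ ∫ ω, γ * g n ω ∂μ := by
      refine integral_mono_ae hcint ((hgint n hnK).const_mul γ) ?_
      filter_upwards [hexp n hn] with ω hω
      have hgnn : 0 ≤ g n ω := (Real.exp_pos _).le
      calc g n ω * (μ[d | F n]) ω ≤ g n ω * γ := by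
            exact mul_le_mul_of_nonneg_left hω hgnn
        _ = γ * g n ω := mul_comm _ _
    rw [h1, h2]
    calc ∫ ω, g n ω * (μ[d | F n]) ω ∂μ ≤ ∫ ω, γ * g n ω ∂μ := h3
      _ = γ * ∫ ω, g n ω ∂μ := integral_const_mul γ _
  -- iterate
  have hiter : ∀ n, n ≤ K → ∫ ω, g n ω ∂μ ≤ γ ^ n := by
    intro n
    induction n with
    | zero =>
      intro _
      simp [hg, hτ0]
    | succ m ih =>
      intro hn
      have hmK : m < K := Nat.lt_of_succ_le hn
      calc ∫ ω, g (m+1) ω ∂μ ≤ γ * ∫ ω, g m ω ∂μ := step m hmK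
        _ ≤ γ * γ ^ m := by
            exact mul_le_mul_of_nonneg_left (ih (le_of_lt hmK)) hγ0.le
        _ = γ ^ (m+1) := (pow_succ' γ m).symm
  -- Markov/Chernoff
  set s : Set Ω := {ω | τ K ω ≤ T} with hs
  have hsmeas : MeasurableSet s :=
    measurableSet_le ((hτmeas K le_rfl).mono (hFle K) le_rfl) measurable_const
  have hkey : Real.exp (-T) * (μ s).toReal ≤ ∫ ω, g K ω ∂μ := by
    have hind : ∫ ω, s.indicator (fun _ => Real.exp (-T)) ω ∂μ
        = Real.exp (-T) * (μ s).toReal := by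
      rw [integral_indicator_const _ hsmeas]
      simp [mul_comm, measureReal_def]
    rw [← hind]
    refine integral_mono ((integrable_const _).indicator hsmeas) (hgint K le_rfl) ?_
    intro ω
    by_cases hω : ω ∈ s
    · rw [Set.indicator_of_mem hω]
      exact Real.exp_le_exp.mpr (neg_le_neg hω)
    · rw [Set.indicator_of_notMem hω]
      exact (Real.exp_pos _).le
  have hfin : ∫ ω, g K ω ∂μ ≤ γ ^ K := hiter K le_rfl
  have hexpT : (0:ℝ) < Real.exp (-T) := Real.exp_pos _
  have : (μ s).toReal ≤ Real.exp T * γ ^ K := by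
    have h := le_trans hkey hfin
    rw [Real.exp_neg] at h hexpT
    calc (μ s).toReal = (Real.exp T)⁻¹⁻¹ * ((Real.exp T)⁻¹ * (μ s).toReal) := by
          field_simp
      _ ≤ (Real.exp T)⁻¹⁻¹ * γ ^ K := by
          exact mul_le_mul_of_nonneg_left h (by positivity)
      _ = Real.exp T * γ ^ K := by rw [inv_inv]
  exact this
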